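/- For the lifted Euler states in 2D: given ρ, ρ̃ > 0 and u, ũ ∈ ℝ², define the symmetric 3×3 matrices Z = [[ρ, ρu₁, ρu₂],[ρu₁, ρu₁² + ρ², ρu₁u₂],[ρu₂, ρu₁u₂, ρu₂² + ρ²]] and Z̃ analogously. Then det(Z − Z̃) = (ρ² − ρ̃²)·( −ρρ̃((u₁−ũ₁)² + (u₂−ũ₂)²) + (ρ² − ρ̃²)(ρ − ρ̃) ). -/

import Mathlib

/-- determinant identity for differences of lifted Euler states. -/
theorem det_lifted_states (ρ ρt : ℝ) (hρ : 0 < ρ) (hρt : 0 < ρt) (u ut : ℝ × ℝ) :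
    let Z : Matrix (Fin 3) (Fin 3) ℝ :=
      Matrix.of ![![ρ, ρ * u.1, ρ * u.2],
                  ![ρ * u.1, ρ * u.1 ^ 2 + ρ ^ 2, ρ * u.1 * u.2],
                  ![ρ * u.2, ρ * u.1 * u.2, ρ * u.2 ^ 2 + ρ ^ 2]]
    let Zt : Matrix (Fin 3) (Fin 3) ℝ :=
      Matrix.of ![![ρt, ρt * ut.1, ρt * ut.2],
                  ![ρt * ut.1, ρt * ut.1 ^ 2 + ρt ^ 2, ρt * ut.1 * ut.2],
                  ![ρt * ut.2, ρt * ut.1 * ut.2, ρt * ut.2 ^ 2 + ρt ^ 2]]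
    (Z - Zt).det = (ρ ^ 2 - ρt ^ 2) *
      (-(ρ * ρt) * ((u.1 - ut.1) ^ 2 + (u.2 - ut.2) ^ 2) + (ρ ^ 2 - ρt ^ 2) * (ρ - ρt)) := by
  intro Z Zt
  simp only [Z, Zt, Matrix.det_fin_three, Matrix.sub_apply, Matrix.of_apply]
  norm_num [Matrix.cons_val_zero, Matrix.cons_val_one, Matrix.cons_val_two, Matrix.tail_cons, Matrix.head_cons]
  ring
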